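/- Let $A, B, K$ be $d \times d$ real matrices, $h \ne 0$, $l \in \mathbb{N}$, and let $x, u, \hat w : \mathbb{N} \to \mathbb{R}^d$ and $M : \mathbb{N} \to \mathbb{N} \to \mathbb{R}^{d \times d}$ satisfy, for all $t$, $\hat w_t = \frac{1}{h}(x_{t+1} - x_t - h(Ax_t + Bu_t))$, and for all $t \ge l$, $u_t = -Kx_t + h\sum_{i=1}^{l} M_t^i \hat w_{t-i}$. Set $Q_h = I + h(A-BK)$, $\Psi_{t,i} = Q_h^i \mathbf{1}_{i \le l} + h\sum_{j=0}^{l} Q_h^j B M_{t-j}^{i-j} \mathbf{1}_{1 \le i-j \le l}$, and define the ideal state $y_{t+1} = h\sum_{i=0}^{2l} \Psi_{t,i} \hat w_{t-i}$ and ideal action $v_t = -K y_t + h \sum_{i=1}^{l} M_t^i \hat w_{t-i}$. Then for every $t \ge 2l$: (a) $x_{t+1} - y_{t+1} = Q_h^{\,l+1} x_{t-l}$; and (b) if moreover $\|Q_h^{\,l+1}\| \le \kappa^2(1-h\gamma)^{l+1}$ and $\|K\| \le \kappa$, then $\|x_{t+1} - y_{t+1}\| \le \kappa^2(1-h\gamma)^{l+1}\|x_{t-l}\|$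 and $\|u_{t+1} - v_{t+1}\| \le \kappa^3 (1-h\gamma)^{l+1} \|x_{t-l}\|$. -/

import Mathlib

open scoped Matrix.Norms.L2Operator

/-- Multiplication of a matrix with a vector of `EuclideanSpace ℝ (Fin d)`
(so that the vector carries the ℓ² norm). -/
noncomputable def mulVecE {d : ℕ} (A : Matrix (Fin d) (Fin d) ℝ)
    (x : EuclideanSpace ℝ (Fin d)) : EuclideanSpace ℝ (Fin d) :=
  WithLp.toLp 2 (A.mulVec x)

/-- The transfer matrix `Ψ_{t,i}` of the DAC policy. -/
noncomputable def Psi {d : ℕ} (Q B : Matrix (Fin d) (Fin d) ℝ) (h : ℝ)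
    (M : ℕ → ℕ → Matrix (Fin d) (Fin d) ℝ) (l t i : ℕ) : Matrix (Fin d) (Fin d) ℝ :=
  (if i ≤ l then Q ^ i else 0) +
    h • ∑ j ∈ Finset.range (l + 1),
      (if 1 ≤ i - j ∧ i - j ≤ l then Q ^ j * B * M (t - j) (i - j) else 0)

section Aux

variable {d : ℕ}

lemma mulVecE_add (A : Matrix (Fin d) (Fin d) ℝ) (x y : EuclideanSpace ℝ (Fin d)) :
    mulVecE A (x + y) = mulVecE A x + mulVecE A y := by simp [mulVecE, Matrix.mulVec_add]

lemma mulVecE_sub (A : Matrix (Fin d) (Fin d) ℝ) (x y : EuclideanSpace ℝ (Fin d)) :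
    mulVecE A (x - y) = mulVecE A x - mulVecE A y := by simp [mulVecE, Matrix.mulVec_sub]

lemma mulVecE_smul (A : Matrix (Fin d) (Fin d) ℝ) (c : ℝ) (x : EuclideanSpace ℝ (Fin d)) :
    mulVecE A (c • x) = c • mulVecE A x := by simp [mulVecE, Matrix.mulVec_smul]

lemma mulVecE_mul (A B : Matrix (Fin d) (Fin d) ℝ) (x : EuclideanSpace ℝ (Fin d)) :
    mulVecE (A * B) x = mulVecE A (mulVecE B x) := by simp [mulVecE, Matrix.mulVec_mulVec]

lemma matAdd_mulVecE (A B : Matrix (Fin d) (Fin d) ℝ) (x : EuclideanSpace ℝ (Fin d)) :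
    mulVecE (A + B) x = mulVecE A x + mulVecE B x := by simp [mulVecE, Matrix.add_mulVec]

lemma matSmul_mulVecE (c : ℝ) (A : Matrix (Fin d) (Fin d) ℝ) (x : EuclideanSpace ℝ (Fin d)) :
    mulVecE (c • A) x = c • mulVecE A x := by simp [mulVecE, Matrix.smul_mulVec]

lemma one_mulVecE (x : EuclideanSpace ℝ (Fin d)) :
    mulVecE (1 : Matrix (Fin d) (Fin d) ℝ) x = x := by simp [mulVecE]

lemma zero_mulVecE (x : EuclideanSpace ℝ (Fin d)) :
    mulVecE (0 : Matrix (Fin d) (Fin d) ℝ) x = 0 := by simp [mulVecE]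

lemma mulVecE_zero (A : Matrix (Fin d) (Fin d) ℝ) :
    mulVecE A (0 : EuclideanSpace ℝ (Fin d)) = 0 := by simp [mulVecE]

lemma mulVecE_neg (A : Matrix (Fin d) (Fin d) ℝ) (x : EuclideanSpace ℝ (Fin d)) :
    mulVecE A (-x) = -(mulVecE A x) := by
  rw [show (-x) = (-1 : ℝ) • x by simp, mulVecE_smul]; simp

lemma matSub_mulVecE (A B : Matrix (Fin d) (Fin d) ℝ) (x : EuclideanSpace ℝ (Fin d)) :
    mulVecE (A - B) x = mulVecE A x - mulVecE B x := by simp [mulVecE, Matrix.sub_mulVec]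

lemma mulVecE_sum (A : Matrix (Fin d) (Fin d) ℝ) (s : Finset ℕ)
    (f : ℕ → EuclideanSpace ℝ (Fin d)) :
    mulVecE A (∑ i ∈ s, f i) = ∑ i ∈ s, mulVecE A (f i) := by
  induction s using Finset.cons_induction with
  | empty => simp [mulVecE_zero]
  | cons a s ha ih => rw [Finset.sum_cons, Finset.sum_cons, mulVecE_add, ih]

lemma matSum_mulVecE (s : Finset ℕ) (f : ℕ → Matrix (Fin d) (Fin d) ℝ)
    (x : EuclideanSpace ℝ (Fin d)) :
    mulVecE (∑ j ∈ s, f j) x = ∑ j ∈ s, mulVecE (f j) x := by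
  induction s using Finset.cons_induction with
  | empty => simp [zero_mulVecE]
  | cons a s ha ih => rw [Finset.sum_cons, Finset.sum_cons, matAdd_mulVecE, ih]

lemma norm_mulVecE_le (A : Matrix (Fin d) (Fin d) ℝ) (x : EuclideanSpace ℝ (Fin d)) :
    ‖mulVecE A x‖ ≤ ‖A‖ * ‖x‖ := A.l2_opNorm_mulVec x

end Aux

/-- Comparison of the actual state/action with the ideal state/action under the
DAC policy: (a) `x (t+1) - y (t+1) = Q^(l+1) x (t-l)`, and (b) under the decay
bound on `Q^(l+1)` and `‖K‖ ≤ κ`, the stated norm bounds on `x (t+1) - y (t+1)`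
and `u (t+1) - v (t+1)`. -/
theorem stmt13 {d : ℕ} (A B K : Matrix (Fin d) (Fin d) ℝ) (h : ℝ) (hh : h ≠ 0)
    (γ κ : ℝ) (l : ℕ)
    (x u w y v : ℕ → EuclideanSpace ℝ (Fin d)) (M : ℕ → ℕ → Matrix (Fin d) (Fin d) ℝ)
    (hw : ∀ t, w t = h⁻¹ • (x (t + 1) - x t - h • (mulVecE A (x t) + mulVecE B (u t))))
    (hu : ∀ t, l ≤ t →
      u t = -(mulVecE K (x t)) + h • ∑ i ∈ Finset.Icc 1 l, mulVecE (M t i) (w (t - i)))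
    (Q : Matrix (Fin d) (Fin d) ℝ) (hQ : Q = 1 + h • (A - B * K))
    (hy : ∀ t, 2 * l ≤ t →
      y (t + 1) = h • ∑ i ∈ Finset.range (2 * l + 1), mulVecE (Psi Q B h M l t i) (w (t - i)))
    (hv : ∀ t, v t = -(mulVecE K (y t)) + h • ∑ i ∈ Finset.Icc 1 l, mulVecE (M t i) (w (t - i))) :
    ∀ t, 2 * l ≤ t →
      x (t + 1) - y (t + 1) = mulVecE (Q ^ (l + 1)) (x (t - l)) ∧
      (‖Q ^ (l + 1)‖ ≤ κ ^ 2 * (1 - h * γ) ^ (l + 1) → ‖K‖ ≤ κ →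
        ‖x (t + 1) - y (t + 1)‖ ≤ κ ^ 2 * (1 - h * γ) ^ (l + 1) * ‖x (t - l)‖ ∧
        ‖u (t + 1) - v (t + 1)‖ ≤ κ ^ 3 * (1 - h * γ) ^ (l + 1) * ‖x (t - l)‖) := by
  -- the one-step "correction" term
  set c : ℕ → EuclideanSpace ℝ (Fin d) := fun s =>
    h • w s + (h * h) • ∑ i ∈ Finset.Icc 1 l, mulVecE (B * M s i) (w (s - i)) with hc
  -- one-step recursion
  have key : ∀ s, l ≤ s → x (s + 1) = mulVecE Q (x s) + c s := by
    intro s hs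
    have h1 : x (s + 1) = x s + h • (mulVecE A (x s) + mulVecE B (u s)) + h • w s := by
      rw [hw s, smul_smul, mul_inv_cancel₀ hh, one_smul]; abel
    rw [hu s hs] at h1
    rw [h1, hQ, hc]
    simp only [matAdd_mulVecE, matSmul_mulVecE, matSub_mulVecE, one_mulVecE,
      mulVecE_add, mulVecE_neg, mulVecE_smul, mulVecE_sum, mulVecE_mul,
      smul_add, smul_neg, smul_sub, smul_smul, Finset.smul_sum]
    abel
  intro t ht
  have hlt : l ≤ t := le_trans (by omega) ht
  -- unrolling the recursion
  have unroll : ∀ k, k ≤ l + 1 →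
      x (t + 1) = mulVecE (Q ^ k) (x (t + 1 - k)) +
        ∑ j ∈ Finset.range k, mulVecE (Q ^ j) (c (t - j)) := by
    intro k
    induction k with
    | zero => intro _; simp [one_mulVecE]
    | succ k ih =>
      intro hk
      have hk' : k ≤ l + 1 := by omega
      rw [ih hk']
      have h1 : t + 1 - k = (t - k) + 1 := by omega
      have h2 : l ≤ t - k := by omega
      rw [h1, key (t - k) h2, mulVecE_add, Finset.sum_range_succ]
      have h3 : t + 1 - (k + 1) = t - k := by omega
      have h4 : mulVecE (Q ^ k) (mulVecE Q (x (t - k))) = mulVecE (Q ^ (k + 1)) (x (t - k)) := by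
        rw [pow_succ, mulVecE_mul]
      rw [h3, h4]
      abel
  have hx : x (t + 1) = mulVecE (Q ^ (l + 1)) (x (t - l)) +
      ∑ j ∈ Finset.range (l + 1), mulVecE (Q ^ j) (c (t - j)) := by
    have := unroll (l + 1) le_rfl
    rwa [show t + 1 - (l + 1) = t - l by omega] at this
  -- the sum of corrections equals the ideal state
  have sum_eq : ∑ j ∈ Finset.range (l + 1), mulVecE (Q ^ j) (c (t - j)) = y (t + 1) := by
    rw [hy t ht]
    -- expand RHS
    have rhs : ∀ i, mulVecE (Psi Q B h M l t i) (w (t - i)) =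
        (if i ≤ l then mulVecE (Q ^ i) (w (t - i)) else 0) +
        h • ∑ j ∈ Finset.range (l + 1),
          (if 1 ≤ i - j ∧ i - j ≤ l then
            mulVecE (Q ^ j * B * M (t - j) (i - j)) (w (t - i)) else 0) := by
      intro i
      rw [Psi, matAdd_mulVecE, matSmul_mulVecE, matSum_mulVecE]
      congr 1
      · split <;> simp [zero_mulVecE]
      · congr 1
        exact Finset.sum_congr rfl fun j _ => by split <;> simp [zero_mulVecE]
    simp only [rhs]
    rw [Finset.sum_add_distrib, smul_add]
    -- first term
    have t1 : ∑ i ∈ Finset.range (2 * l + 1),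
        (if i ≤ l then mulVecE (Q ^ i) (w (t - i)) else 0) =
        ∑ j ∈ Finset.range (l + 1), mulVecE (Q ^ j) (w (t - j)) := by
      rw [← Finset.sum_filter]
      refine Finset.sum_congr ?_ fun _ _ => rfl
      ext i
      simp only [Finset.mem_filter, Finset.mem_range]
      omega
    -- second term: swap and reindex
    have t2 : ∑ i ∈ Finset.range (2 * l + 1), (h • ∑ j ∈ Finset.range (l + 1),
          (if 1 ≤ i - j ∧ i - j ≤ l then
            mulVecE (Q ^ j * B * M (t - j) (i - j)) (w (t - i)) else 0)) =
        h • ∑ j ∈ Finset.range (l + 1), ∑ i' ∈ Finset.Icc 1 l,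
          mulVecE (Q ^ j * B * M (t - j) i') (w (t - (j + i'))) := by
      rw [← Finset.smul_sum, Finset.sum_comm]
      congr 1
      refine Finset.sum_congr rfl fun j hj => ?_
      have hjl : j ≤ l := by simpa [Nat.lt_succ_iff] using Finset.mem_range.mp hj
      rw [← Finset.sum_filter]
      have hfil : (Finset.range (2 * l + 1)).filter (fun i => 1 ≤ i - j ∧ i - j ≤ l) =
          Finset.Icc (j + 1) (j + l) := by
        ext i
        simp only [Finset.mem_filter, Finset.mem_range, Finset.mem_Icc]
        omega
      rw [hfil, show Finset.Icc (j + 1) (j + l) =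
          (Finset.Icc 1 l).map (addLeftEmbedding j) from (Finset.map_add_left_Icc 1 l j).symm,
        Finset.sum_map]
      refine Finset.sum_congr rfl fun i' hi' => ?_
      have he : addLeftEmbedding j i' = j + i' := rfl
      rw [he, show j + i' - j = i' by omega]
    rw [t1, t2]
    -- expand LHS
    have lhsE : ∀ j, mulVecE (Q ^ j) (c (t - j)) =
        h • mulVecE (Q ^ j) (w (t - j)) + (h * h) • ∑ i' ∈ Finset.Icc 1 l,
          mulVecE (Q ^ j * B * M (t - j) i') (w (t - (j + i'))) := by
      intro j
      rw [hc]
      simp only [mulVecE_add, mulVecE_smul, mulVecE_sum]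
      congr 2
      refine Finset.sum_congr rfl fun i' hi' => ?_
      simp only [mul_assoc, mulVecE_mul, Nat.sub_sub]
    simp only [lhsE]
    rw [Finset.sum_add_distrib, ← Finset.smul_sum, ← Finset.smul_sum, smul_smul]
  have hdiff : x (t + 1) - y (t + 1) = mulVecE (Q ^ (l + 1)) (x (t - l)) := by
    rw [hx, ← sum_eq]; abel
  refine ⟨hdiff, fun hQb hKb => ?_⟩
  have hxb : ‖x (t + 1) - y (t + 1)‖ ≤ κ ^ 2 * (1 - h * γ) ^ (l + 1) * ‖x (t - l)‖ := by
    rw [hdiff]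
    calc ‖mulVecE (Q ^ (l + 1)) (x (t - l))‖ ≤ ‖Q ^ (l + 1)‖ * ‖x (t - l)‖ :=
          norm_mulVecE_le _ _
      _ ≤ κ ^ 2 * (1 - h * γ) ^ (l + 1) * ‖x (t - l)‖ :=
          mul_le_mul_of_nonneg_right hQb (norm_nonneg _)
  refine ⟨hxb, ?_⟩
  -- difference of actions
  have hdu : u (t + 1) - v (t + 1) = -(mulVecE K (x (t + 1) - y (t + 1))) := by
    rw [hu (t + 1) (by omega), hv (t + 1), mulVecE_sub]
    abel
  have hKnn : (0 : ℝ) ≤ κ := le_trans (norm_nonneg _) hKb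
  have hQnn : (0 : ℝ) ≤ κ ^ 2 * (1 - h * γ) ^ (l + 1) := le_trans (norm_nonneg _) hQb
  rw [hdu, norm_neg]
  calc ‖mulVecE K (x (t + 1) - y (t + 1))‖ ≤ ‖K‖ * ‖x (t + 1) - y (t + 1)‖ :=
        norm_mulVecE_le _ _
    _ ≤ κ * (κ ^ 2 * (1 - h * γ) ^ (l + 1) * ‖x (t - l)‖) :=
        mul_le_mul hKb hxb (norm_nonneg _) hKnn
    _ = κ ^ 3 * (1 - h * γ) ^ (l + 1) * ‖x (t - l)‖ := by ring
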